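/- Let X be a set, (Y,d) a metric space, f : X → (-∞,+∞] proper, A : Y ⇉ X a set-valued map with G := A⁻¹ having closed values, y₀ ∈ Y, and p(x,y) = f(x) if x ∈ A(y), +∞ otherwise. For the multiplier class Ψ_d = {ψ(y) = -a·d(y,ȳ) + c : ȳ ∈ Y, a > 0, c ∈ ℝ} and Lagrangian L(x,ȳ,a) = -a·d(y₀,ȳ) + f(x) + inf_{y∈G(x)} a·d(y,ȳ), it holds that sup_{(ȳ,a)∈Y×ℝ₊} L(x,ȳ,a) = f(x) if x ∈ A(y₀) and = +∞ if x ∉ A(y₀) (assuming f(x) < +∞ in the latter case gives +∞; the formula holds for all x with G(x) closed and nonempty). -/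

import Mathlib

open scoped Classical in
theorem sup_lagrangian_psiD_eq_primal
    {X Y : Type*} [Nonempty X] [MetricSpace Y]
    (f : X → EReal) (hbot : ∀ x, f x ≠ ⊥) (hproper : ∃ x, f x ≠ ⊤)
    (A : Y → Set X) (y₀ : Y)
    (hGne : ∀ x : X, {y : Y | x ∈ A y}.Nonempty)
    (hGcl : ∀ x : X, IsClosed {y : Y | x ∈ A y}) :
    ∀ x : X,
      (⨆ ybar : Y, ⨆ a : {a : ℝ // 0 < a},
        ((-(a.1) * dist y₀ ybar + a.1 * Metric.infDist ybar {y : Y | x ∈ A y} : ℝ) : EReal)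
          + f x) =
      (if x ∈ A y₀ then f x else ⊤) := by
  intro x
  by_cases h : x ∈ A y₀
  · rw [if_pos h]
    apply le_antisymm
    · refine iSup_le fun ybar => iSup_le fun a => ?_
      have hle : Metric.infDist ybar {y : Y | x ∈ A y} ≤ dist y₀ ybar := by
        rw [dist_comm]
        exact Metric.infDist_le_dist_of_mem h
      have hr : (-(a.1) * dist y₀ ybar + a.1 * Metric.infDist ybar {y : Y | x ∈ A y} : ℝ) ≤ 0 := by
        nlinarith [a.2.le]
      calc ((-(a.1) * dist y₀ ybar + a.1 * Metric.infDist ybar {y : Y | x ∈ A y} : ℝ) : EReal)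
            + f x ≤ (0 : EReal) + f x := by
              apply add_le_add_left
              exact_mod_cast hr
        _ = f x := by rw [zero_add]
    · refine le_iSup_of_le y₀ (le_iSup_of_le ⟨1, one_pos⟩ ?_)
      have h1 : Metric.infDist y₀ {y : Y | x ∈ A y} = 0 := Metric.infDist_zero_of_mem h
      simp [h1]
  · rw [if_neg h]
    rw [eq_top_iff]
    refine le_trans ?_ (le_iSup _ y₀)
    by_cases hfx : f x = ⊤
    · refine le_trans ?_ (le_iSup _ (⟨1, one_pos⟩ : {a : ℝ // 0 < a}))
      simp [hfx]
    · obtain ⟨c, hc⟩ : ∃ c : ℝ, f x = c := ⟨(f x).toReal, (EReal.coe_toReal hfx (hbot x)).symm⟩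
      have hr : 0 < Metric.infDist y₀ {y : Y | x ∈ A y} := by
        exact ((hGcl x).notMem_iff_infDist_pos (hGne x)).1 h
      set r := Metric.infDist y₀ {y : Y | x ∈ A y} with hrdef
      rw [top_le_iff]
      rw [iSup_eq_top]
      intro b hb
      induction b using EReal.rec with
      | bot =>
        refine ⟨⟨1, one_pos⟩, ?_⟩
        rw [hc]
        exact bot_lt_iff_ne_bot.2 (by simp [← EReal.coe_add])
      | coe B =>
        have ha : (0:ℝ) < max 1 ((B - c)/r + 1) := lt_max_of_lt_left one_pos
        refine ⟨⟨max 1 ((B - c)/r + 1), ha⟩, ?_⟩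
        rw [hc]
        have key : B < max 1 ((B - c)/r + 1) * r + c := by
          have h1 : (B - c)/r + 1 ≤ max 1 ((B - c)/r + 1) := le_max_right _ _
          have h2 : (B - c)/r * r = B - c := div_mul_cancel₀ _ hr.ne'
          nlinarith
        calc ((B:ℝ) : EReal) < ((max 1 ((B - c)/r + 1) * r + c : ℝ) : EReal) := by
              exact_mod_cast key
          _ = ((-(max 1 ((B - c)/r + 1)) * dist y₀ y₀ + max 1 ((B - c)/r + 1) * r : ℝ) : EReal)
              + (c : EReal) := by
              rw [dist_self]
              norm_cast
              ring
      | top => exact absurd hb (lt_irrefl _)
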